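/- (Generalized Pythagorean identity.) Let V ⊆ ℝ be an open interval, G : V → ℝ strictly convex and differentiable with derivative g = G′, and f the inverse of g. Fix N ∈ ℕ and for i = 1,…,N let δ_i ∈ {0,1}, q_i > 0, z_i ∈ ℝ^d, and initial weights ω_i^{(0)} ∈ V. Define the weighted total Bregman divergence D̃_G(ω‖ω′) = Σ_{i=1}^N δ_i q_i^{-1} D_G(ω_i‖ω′_i) and the constraint set C = {ω : Σ_{i=1}^N δ_i ω_i z_i = Σ_{i=1}^N z_i}. Suppose ω̂ ∈ C has the dual form ω̂_i = f(g(ω_i^{(0)}) + q_i λ̂ᵀ z_i) for some λ̂ ∈ ℝ^d (for all i with δ_i = 1). Then for every ω ∈ C with entries in V on {i : δ_i = 1}: D̃_G(ω‖ω^{(0)}) = D̃_G(ω‖ω̂) + D̃_G(ω̂‖ω^{(0)}). -/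
import Mathlib


open Matrix Finset

/-- Generalized Pythagorean identity: if `ω̂ ∈ C` has the dual form
`ω̂_i = f(g(ω⁰_i) + q_i λ̂ᵀz_i)` (with `f = g⁻¹`), then for every calibrated
`ω ∈ C`, the weighted total Bregman divergences satisfy
`D̃(ω‖ω⁰) = D̃(ω‖ω̂) + D̃(ω̂‖ω⁰)`. -/
theorem stmt_8 (N d : ℕ) (V : Set ℝ) (hVopen : IsOpen V) (hVconn : V.OrdConnected)
    (G g f : ℝ → ℝ) (hconv : StrictConvexOn ℝ V G)
    (hderiv : ∀ ω ∈ V, HasDerivAt G (g ω) ω)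
    (hfinv : ∀ ω ∈ V, f (g ω) = ω)
    (δ q ω0 : Fin N → ℝ) (hδ : ∀ i, δ i = 0 ∨ δ i = 1) (hq : ∀ i, 0 < q i)
    (hω0 : ∀ i, ω0 i ∈ V)
    (z : Fin N → Fin d → ℝ)
    (D : ℝ → ℝ → ℝ) (hD : ∀ a b, D a b = G a - G b - g b * (a - b))
    (Dt : (Fin N → ℝ) → (Fin N → ℝ) → ℝ)
    (hDt : ∀ ω ω' : Fin N → ℝ, Dt ω ω' = ∑ i, δ i * (q i)⁻¹ * D (ω i) (ω' i))
    (lam : Fin d → ℝ)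
    (hrange : ∀ i, δ i = 1 → ∃ ω ∈ V, g ω = g (ω0 i) + q i * (lam ⬝ᵥ z i))
    (ωhat : Fin N → ℝ)
    (hdual : ∀ i, δ i = 1 → ωhat i = f (g (ω0 i) + q i * (lam ⬝ᵥ z i)))
    (hcal : ∑ i, (δ i * ωhat i) • z i = ∑ i, z i) :
    ∀ ω : Fin N → ℝ, (∀ i, δ i = 1 → ω i ∈ V) →
      (∑ i, (δ i * ω i) • z i = ∑ i, z i) →
      Dt ω ω0 = Dt ω ωhat + Dt ωhat ω0 := by
  intro ω hωV hωcal
  have hhat : ∀ i, δ i = 1 → g (ωhat i) = g (ω0 i) + q i * (lam ⬝ᵥ z i) := by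
    intro i hi
    obtain ⟨w, hwV, hgw⟩ := hrange i hi
    have h := hdual i hi
    rw [← hgw, hfinv w hwV] at h
    rw [h, hgw]
  have expand : ∀ w : Fin N → ℝ,
      lam ⬝ᵥ (∑ i, (δ i * w i) • z i) = ∑ i, δ i * (lam ⬝ᵥ z i) * w i := by
    intro w
    simp only [dotProduct, Finset.sum_apply, Pi.smul_apply, smul_eq_mul,
      Finset.mul_sum, Finset.sum_mul]
    rw [Finset.sum_comm]
    exact Finset.sum_congr rfl fun i _ => Finset.sum_congr rfl fun j _ => by ring
  have hzero : ∑ i, δ i * (lam ⬝ᵥ z i) * (ω i - ωhat i) = 0 := by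
    have h1 := congrArg (fun v => lam ⬝ᵥ v) hωcal
    have h2 := congrArg (fun v => lam ⬝ᵥ v) hcal
    simp only [expand] at h1 h2
    have : ∑ i, δ i * (lam ⬝ᵥ z i) * (ω i - ωhat i)
        = (∑ i, δ i * (lam ⬝ᵥ z i) * ω i) - ∑ i, δ i * (lam ⬝ᵥ z i) * ωhat i := by
      rw [← Finset.sum_sub_distrib]
      exact Finset.sum_congr rfl fun i _ => by ring
    rw [this, h1, h2, sub_self]
  have key : Dt ω ω0 - (Dt ω ωhat + Dt ωhat ω0)
      = ∑ i, δ i * (lam ⬝ᵥ z i) * (ω i - ωhat i) := by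
    rw [hDt, hDt, hDt, ← Finset.sum_add_distrib, ← Finset.sum_sub_distrib]
    apply Finset.sum_congr rfl
    intro i _
    rcases hδ i with h0 | h1
    · simp [h0]
    · have hg' := hhat i h1
      rw [h1, hD, hD, hD, hg']
      have hqi := (hq i).ne'
      field_simp
      ring
  linarith [key, hzero]
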